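/- Let F be a group and φ₁, φ₂ ∈ Aut(F), with suspensions G₁ = F ⋊_{φ₁} ℤ and G₂ = F ⋊_{φ₂} ℤ, fibers ι₁(F), ι₂(F) and transverse elements t₁, t₂. Let Ψ : G₁ → G₂ be a group isomorphism whose induced map on abelianizations sends the image of ι₁(F) into the image of ι₂(F) and sends the class of t₁ into (class of t₂)·(image of ι₂(F)). Then Ψ(ι₁(F)) = ι₂(F) and Ψ(t₁) ∈ t₂·ι₂(F). -/

import Mathlib

open SemidirectProduct

/-- If an isomorphism of suspensions induces, on abelianizations, a map sending the
image of the fiber into the image of the fiber and the class of `t₁` into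
`(class of t₂)·(image of the fiber)`, then the isomorphism itself maps the fiber onto
the fiber and satisfies `Ψ t₁ ∈ t₂ · ι₂(F)`. -/
theorem abelianized_conditions_give_fiber_orientation_preservation
    {F : Type*} [Group F] (φ₁ φ₂ : MulAut F) :
    let G₁ := F ⋊[zpowersHom (MulAut F) φ₁] Multiplicative ℤ
    let G₂ := F ⋊[zpowersHom (MulAut F) φ₂] Multiplicative ℤ
    let ι₁ : F →* G₁ := SemidirectProduct.inl
    let ι₂ : F →* G₂ := SemidirectProduct.inl
    let t₁ : G₁ := SemidirectProduct.inr (Multiplicative.ofAdd 1)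
    let t₂ : G₂ := SemidirectProduct.inr (Multiplicative.ofAdd 1)
    ∀ Ψ : G₁ ≃* G₂,
      Subgroup.map (Abelianization.map Ψ.toMonoidHom)
          (Subgroup.map Abelianization.of ι₁.range) ≤
        Subgroup.map Abelianization.of ι₂.range →
      (∃ x ∈ Subgroup.map Abelianization.of ι₂.range,
        Abelianization.map Ψ.toMonoidHom (Abelianization.of t₁) =
          Abelianization.of t₂ * x) →
      Subgroup.map Ψ.toMonoidHom ι₁.range = ι₂.range ∧ ∃ f : F, Ψ t₁ = t₂ * ι₂ f := by
  intro G₁ G₂ ι₁ ι₂ t₁ t₂ Ψ hfib ht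
  -- rightHom factors through the abelianization
  set ρ : Abelianization G₂ →* Multiplicative ℤ :=
    Abelianization.lift (SemidirectProduct.rightHom) with hρ
  have hρ_of : ∀ g : G₂, ρ (Abelianization.of g) = SemidirectProduct.rightHom g :=
    fun g => Abelianization.lift_apply_of _ g
  -- Ψ sends ι₁.range into the kernel of rightHom
  have key : ∀ f : F, SemidirectProduct.rightHom (Ψ (ι₁ f)) = 1 := by
    intro f
    have h1 : Abelianization.map Ψ.toMonoidHom (Abelianization.of (ι₁ f)) ∈
        Subgroup.map Abelianization.of ι₂.range := by
      apply hfib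
      exact ⟨Abelianization.of (ι₁ f), ⟨ι₁ f, ⟨f, rfl⟩, rfl⟩, rfl⟩
    obtain ⟨y, ⟨f', hf', rfl⟩, hy⟩ := h1
    have := congrArg ρ hy
    rw [Abelianization.map_of, hρ_of, hρ_of] at this
    exact this.symm.trans (rightHom_inl f')
  -- Ψ sends t₁ to an element with rightHom equal to ofAdd 1
  have keyt : SemidirectProduct.rightHom (Ψ t₁) = Multiplicative.ofAdd 1 := by
    obtain ⟨x, ⟨y, ⟨f', hf', rfl⟩, rfl⟩, hx⟩ := ht
    have := congrArg ρ hx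
    rw [Abelianization.map_of, hρ_of, map_mul, hρ_of, hρ_of] at this
    exact this.trans (by
      rw [show SemidirectProduct.rightHom (ι₂ f') = 1 from rightHom_inl f', mul_one]
      exact rightHom_inr _)
  -- rightHom₂ ∘ Ψ = rightHom₁
  have comp : ∀ g : G₁, SemidirectProduct.rightHom (Ψ g) =
      SemidirectProduct.rightHom g := by
    intro g
    have hg : g = ι₁ g.left * SemidirectProduct.inr g.right :=
      (inl_left_mul_inr_right g).symm
    have hinr : (SemidirectProduct.inr g.right : G₁) = t₁ ^ (Multiplicative.toAdd g.right) := by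
      show SemidirectProduct.inr g.right = (SemidirectProduct.inr (Multiplicative.ofAdd 1) : G₁) ^ _
      rw [← map_zpow]
      congr 1
      rw [← ofAdd_zsmul, smul_eq_mul, mul_one, ofAdd_toAdd]
    have hzp : ∀ n : ℤ, SemidirectProduct.rightHom (Ψ (t₁ ^ n)) =
        Multiplicative.ofAdd 1 ^ n := by
      intro n; rw [map_zpow, map_zpow, keyt]
    have e : g = ι₁ g.left * t₁ ^ (Multiplicative.toAdd g.right) := by
      conv_lhs => rw [← inl_left_mul_inr_right g]
      rw [hinr]
    have h1 : SemidirectProduct.rightHom (Ψ g) =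
        Multiplicative.ofAdd 1 ^ Multiplicative.toAdd g.right := by
      conv_lhs => rw [e]
      rw [map_mul, map_mul, key, one_mul, hzp]
    have h2 : SemidirectProduct.rightHom g =
        Multiplicative.ofAdd 1 ^ Multiplicative.toAdd g.right := by
      show g.right = _
      rw [← ofAdd_zsmul, smul_eq_mul, mul_one, ofAdd_toAdd]
    rw [h1, h2]
  constructor
  · apply le_antisymm
    · rintro g ⟨h, ⟨f, rfl⟩, rfl⟩
      rw [range_inl_eq_ker_rightHom, MonoidHom.mem_ker]
      exact key f
    · intro g hg
      rw [range_inl_eq_ker_rightHom, MonoidHom.mem_ker] at hg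
      refine ⟨Ψ.symm g, ?_, by simp⟩
      have h2 : SemidirectProduct.rightHom (Ψ.symm g) = 1 := by
        rw [← comp (Ψ.symm g), Ψ.apply_symm_apply]; exact hg
      rw [range_inl_eq_ker_rightHom]
      exact h2
  · refine ⟨φ₂⁻¹ (Ψ t₁).left, ?_⟩
    have hr : (Ψ t₁).right = Multiplicative.ofAdd 1 := keyt
    ext
    · show (Ψ t₁).left = (t₂ * ι₂ (φ₂⁻¹ (Ψ t₁).left)).left
      rw [SemidirectProduct.mul_left, left_inr, right_inr, left_inl, one_mul]
      simp
    · show (Ψ t₁).right = (t₂ * ι₂ (φ₂⁻¹ (Ψ t₁).left)).right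
      rw [SemidirectProduct.mul_right, right_inr, right_inl, mul_one, hr]
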